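/- Let a, b be integers with 1 ≤ a ≤ b ≤ a + 1. Then a valid weight function of the truncated affine arrangement 𝒜^{a,b}_{n−1} is m-acyclic (has no m-ascending directed cycle) if and only if it contains no m-ascending directed cycle of length three. -/

import Mathlib

/-- Cyclically consecutive pairs along a list of vertices. -/
def cpairs {n : ℕ} (c : List (Fin n)) : List (Fin n × Fin n) := c.zip (c.rotate 1)

/-- `c` is a directed cycle of the weighted digraph `w`, an edge `u → v`
being present when `w u v ≠ ⊥` (`⊥` stands for `-∞`). -/
def IsCycle {n : ℕ} (w : Fin n → Fin n → WithBot ℤ) (c : List (Fin n)) : Prop :=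
  2 ≤ c.length ∧ c.Nodup ∧ ∀ p ∈ cpairs c, w p.1 p.2 ≠ ⊥

/-- Total weight of the edges of a cycle. -/
def cycWeight {n : ℕ} (w : Fin n → Fin n → WithBot ℤ) (c : List (Fin n)) : WithBot ℤ :=
  ((cpairs c).map fun p => w p.1 p.2).sum

/-- An `m`-ascending cycle: a directed cycle of nonnegative total weight. -/
def MAscending {n : ℕ} (w : Fin n → Fin n → WithBot ℤ) (c : List (Fin n)) : Prop :=
  IsCycle w c ∧ 0 ≤ cycWeight w c

/-- A weighted digraph is `m`-acyclic if it has no `m`-ascending cycle. -/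
def MAcyclic {n : ℕ} (w : Fin n → Fin n → WithBot ℤ) : Prop :=
  ∀ c : List (Fin n), ¬ MAscending w c

/-- `w` is a valid weight function of the contiguous integral deformation of
the braid arrangement determined by the bounds `a = α` and `b = β`:
`w i j ∈ {α i j, …, β i j} ∪ {⊥}`, `w i j = ⊥ ↔ w j i = β j i`, and
`w j i = -1 - w i j` whenever both values are finite.  There are no loops. -/
def ValidW {n : ℕ} (a b : Fin n → Fin n → ℤ) (w : Fin n → Fin n → WithBot ℤ) : Prop :=
  (∀ i, w i i = ⊥) ∧
  ∀ i j : Fin n, i ≠ j →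
    (w i j ≠ ⊥ → (a i j : WithBot ℤ) ≤ w i j ∧ w i j ≤ (b i j : WithBot ℤ)) ∧
    (w i j = ⊥ ↔ w j i = (b j i : WithBot ℤ)) ∧
    (∀ x y : ℤ, w i j = (x : WithBot ℤ) → w j i = (y : WithBot ℤ) → y = -1 - x)

/-- Lower bounds of the truncated affine arrangement `A^{a,b}_{n-1}`:
`α(i,j) = 1 - a` for `i < j`, extended by `α(j,i) = -β(i,j) = 1 - b`. -/
def trAlpha {n : ℕ} (a b : ℤ) (u v : Fin n) : ℤ := if u < v then 1 - a else 1 - b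

/-- Upper bounds of the truncated affine arrangement `A^{a,b}_{n-1}`:
`β(i,j) = b - 1` for `i < j`, extended by `β(j,i) = -α(i,j) = a - 1`. -/
def trBeta {n : ℕ} (a b : ℤ) (u v : Fin n) : ℤ := if u < v then b - 1 else a - 1

private lemma rotate_one_cons {α : Type*} (x : α) (l : List α) :
    (x :: l).rotate 1 = l ++ [x] := by
  simpa using List.rotate_cons_succ l x 0

private lemma zip_rotate {α β : Type*} (l : List α) (l' : List β)
    (h : l.length = l'.length) (k : ℕ) :
    (l.rotate k).zip (l'.rotate k) = (l.zip l').rotate k := by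
  apply List.ext_getElem
  · simp [h]
  · intro i h1 h2
    simp only [List.getElem_zip, List.getElem_rotate, List.length_zip, h, min_self]

private lemma cpairs_rotate {n : ℕ} (c : List (Fin n)) (k : ℕ) :
    cpairs (c.rotate k) = (cpairs c).rotate k := by
  unfold cpairs
  rw [← zip_rotate c (c.rotate 1) (by simp) k]
  congr 1
  rw [List.rotate_rotate, List.rotate_rotate, Nat.add_comm]

private lemma cpairs_cons₂ {n : ℕ} (x y : Fin n) (l : List (Fin n)) :
    cpairs (x :: y :: l) = (x, y) :: ((y :: l).zip (l ++ [x])) := by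
  unfold cpairs
  rw [rotate_one_cons, List.cons_append, List.zip_cons_cons]

private lemma sum_coe {n : ℕ} (w : Fin n → Fin n → WithBot ℤ) (l : List (Fin n × Fin n))
    (h : ∀ p ∈ l, w p.1 p.2 ≠ ⊥) :
    (l.map fun p => w p.1 p.2).sum
      = (((l.map fun p => (w p.1 p.2).unbotD 0).sum : ℤ) : WithBot ℤ) := by
  induction l with
  | nil => simp
  | cons q t ih =>
    obtain ⟨x, hx⟩ := WithBot.ne_bot_iff_exists.1 (h q List.mem_cons_self)
    simp only [List.map_cons, List.sum_cons]
    rw [ih (fun p hp => h p (List.mem_cons_of_mem _ hp)), ← hx, WithBot.unbotD_coe,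
      ← WithBot.coe_add]

private lemma cycWeight_rotate {n : ℕ} (w : Fin n → Fin n → WithBot ℤ)
    (c : List (Fin n)) (k : ℕ) : cycWeight w (c.rotate k) = cycWeight w c := by
  unfold cycWeight
  rw [cpairs_rotate]
  exact List.Perm.sum_eq (List.Perm.map _ (List.rotate_perm _ _))

private lemma masc_rotate {n : ℕ} {w : Fin n → Fin n → WithBot ℤ} {c : List (Fin n)}
    (h : MAscending w c) (k : ℕ) : MAscending w (c.rotate k) := by
  obtain ⟨⟨h2, hnd, hp⟩, hW⟩ := h
  refine ⟨⟨by simpa using h2, List.nodup_rotate.2 hnd, ?_⟩, ?_⟩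
  · intro p hq
    rw [cpairs_rotate] at hq
    exact hp p (List.mem_rotate.1 hq)
  · rwa [cycWeight_rotate]

private lemma four_dest {α : Type*} (r : List α) (h : 4 ≤ r.length) :
    ∃ x y z s t, r = x :: y :: z :: s :: t := by
  match r with
  | x :: y :: z :: s :: t => exact ⟨x, y, z, s, t, rfl⟩
  | [] | [_] | [_, _] | [_, _, _] => simp at h

private lemma sum_map_neg (l : List ℤ) : (l.map fun x : ℤ => -x).sum = -l.sum := by
  induction l with
  | nil => simp
  | cons q t ih => simp [ih]; ring
private theorem core_noasc (n : ℕ) (a b : ℤ) (ha : 1 ≤ a) (hab : a ≤ b) (hba : b ≤ a + 1)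
    (w : Fin n → Fin n → WithBot ℤ) (hw : ValidW (trAlpha a b) (trBeta a b) w)
    (h3 : ∀ c : List (Fin n), c.length = 3 → ¬ MAscending w c) :
    ∀ m (c : List (Fin n)), c.length = m → ¬ MAscending w c := by
  intro m
  induction m using Nat.strong_induction_on with
  | _ m IH =>
  intro c hlen hasc
  have h2m : 2 ≤ m := hlen ▸ hasc.1.1
  rcases Nat.lt_or_ge m 4 with hm | hm4
  · -- small cases m = 2, m = 3
    interval_cases m
    · -- m = 2
      rcases c with _ | ⟨x, c2⟩
      · simp at hlen
      rcases c2 with _ | ⟨y, c3⟩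
      · simp at hlen
      rcases c3 with _ | ⟨z, c4⟩
      · -- c = [x, y]
        have hxy : x ≠ y := by
          have hnd := hasc.1.2.1
          simp only [List.nodup_cons, List.mem_singleton] at hnd
          exact hnd.1
        have hcp : cpairs [x, y] = [(x, y), (y, x)] := by
          rw [cpairs_cons₂]
          simp
        have hp1 : w x y ≠ ⊥ := hasc.1.2.2 (x, y) (by rw [hcp]; simp)
        have hp2 : w y x ≠ ⊥ := hasc.1.2.2 (y, x) (by rw [hcp]; simp)
        obtain ⟨p, hp⟩ := WithBot.ne_bot_iff_exists.1 hp1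
        obtain ⟨q, hq⟩ := WithBot.ne_bot_iff_exists.1 hp2
        have hpq : q = -1 - p := (hw.2 x y hxy).2.2 p q hp.symm hq.symm
        have hW : cycWeight w [x, y] = ((p + q : ℤ) : WithBot ℤ) := by
          unfold cycWeight
          rw [hcp]
          simp only [List.map_cons, List.map_nil, List.sum_cons, List.sum_nil, ← hp, ← hq,
            add_zero, ← WithBot.coe_add]
        have h0 := hasc.2
        rw [hW] at h0
        have : (0 : ℤ) ≤ p + q := by exact_mod_cast h0
        omega
      · exfalso
        simp only [List.length_cons] at hlen
        omega
    · -- m = 3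
      exact h3 c hlen hasc
  · -- main case : m ≥ 4
    have hc0 : 0 < c.length := by omega
    obtain ⟨dflt⟩ : Nonempty (Fin n) := ⟨c.get ⟨0, hc0⟩⟩
    obtain ⟨g, hgdef0⟩ : ∃ g : ℕ → Fin n, ∀ k, g k = c.getD (k % m) dflt := ⟨_, fun _ => rfl⟩
    have hnd : c.Nodup := hasc.1.2.1
    have hm0 : 0 < m := by omega
    have hgdef : ∀ k, g k = (c)[k % m]'(by rw [hlen]; exact Nat.mod_lt _ hm0) := by
      intro k
      rw [hgdef0]
      exact List.getD_eq_getElem _ _ _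
    have hgne : ∀ k j, 0 < j → j < m → g k ≠ g (k + j) := by
      intro k j hj0 hjm heq
      rw [hgdef, hgdef] at heq
      have hkm : k % m = (k + j) % m := (List.Nodup.getElem_inj_iff hnd).1 heq
      have hMod : j ≡ 0 [MOD m] :=
        Nat.ModEq.add_left_cancel' k (show (k + j) % m = (k + 0) % m by simpa using hkm.symm)
      have hj' : j % m = 0 := by simpa [Nat.ModEq] using hMod
      rw [Nat.mod_eq_of_lt hjm] at hj'
      omega
    have rot4 : ∀ k, ∃ rest, c.rotate k = g k :: g (k+1) :: g (k+2) :: g (k+3) :: rest := by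
      intro k
      have hlr : (c.rotate k).length = m := by rw [List.length_rotate, hlen]
      obtain ⟨x, y, z, s, t, hxy⟩ := four_dest (c.rotate k) (by omega)
      have hget : ∀ i, i < m → ∀ (hh : i < (c.rotate k).length),
          (c.rotate k)[i]'hh = g (k + i) := by
        intro i him hh
        rw [List.getElem_rotate, hgdef]
        have e : (i + k) % c.length = (k + i) % m := by rw [hlen, Nat.add_comm]
        simp only [e]
      have hopt : ∀ i, i < m → (c.rotate k)[i]? = some (g (k + i)) := by
        intro i him
        rw [List.getElem?_eq_getElem (show i < (c.rotate k).length by omega),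
          hget i him]
      have h0 : x = g (k + 0) := by
        have h := hopt 0 (by omega)
        rw [hxy] at h
        simpa using h
      have h1 : y = g (k + 1) := by
        have h := hopt 1 (by omega)
        rw [hxy] at h
        simpa using h
      have h2 : z = g (k + 2) := by
        have h := hopt 2 (by omega)
        rw [hxy] at h
        simpa using h
      have h3' : s = g (k + 3) := by
        have h := hopt 3 (by omega)
        rw [hxy] at h
        simpa using h
      exact ⟨t, by rw [hxy, h0, h1, h2, h3', Nat.add_zero]⟩
    have hmem : ∀ k, (g k, g (k+1)) ∈ cpairs c := by
      intro k
      obtain ⟨rest, hr⟩ := rot4 k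
      have h1 : (g k, g (k+1)) ∈ cpairs (c.rotate k) := by
        rw [hr, cpairs_cons₂]
        exact List.mem_cons_self
      rw [cpairs_rotate] at h1
      exact List.mem_rotate.1 h1
    have hpres : ∀ k, w (g k) (g (k+1)) ≠ ⊥ := fun k => hasc.1.2.2 _ (hmem k)
    obtain ⟨E, hEdef⟩ : ∃ E : ℕ → ℤ, ∀ k, E k = (w (g k) (g (k+1))).unbotD 0 :=
      ⟨_, fun _ => rfl⟩
    have hE : ∀ k, w (g k) (g (k+1)) = ((E k : ℤ) : WithBot ℤ) := by
      intro k
      obtain ⟨x, hx⟩ := WithBot.ne_bot_iff_exists.1 (hpres k)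
      rw [hEdef, ← hx, WithBot.unbotD_coe]
    have hEb : ∀ k, trAlpha a b (g k) (g (k+1)) ≤ E k ∧ E k ≤ trBeta a b (g k) (g (k+1)) := by
      intro k
      have hb := (hw.2 (g k) (g (k+1)) (hgne k 1 (by omega) (by omega))).1 (hpres k)
      rw [hE k] at hb
      exact ⟨WithBot.coe_le_coe.mp hb.1, WithBot.coe_le_coe.mp hb.2⟩
    have hβ1 : ∀ u v : Fin n, a - 1 ≤ trBeta a b u v ∧ trBeta a b u v ≤ b - 1 := by
      intro u v
      unfold trBeta
      split <;> omega
    have hα1 : ∀ u v : Fin n, 1 - b ≤ trAlpha a b u v ∧ trAlpha a b u v ≤ 1 - a := by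
      intro u v
      unfold trAlpha
      split <;> omega
    set eL : List ℤ := (cpairs c).map (fun p => (w p.1 p.2).unbotD 0) with heL
    set S : ℤ := eL.sum with hS
    have hSW : cycWeight w c = ((S : ℤ) : WithBot ℤ) := by
      unfold cycWeight
      rw [sum_coe w _ hasc.1.2.2, hS, heL]
    have hS0 : (0 : ℤ) ≤ S := by
      have h0 := hasc.2
      rw [hSW] at h0
      exact_mod_cast h0
    -- triangles are not ascending
    have tri : ∀ k (y : ℤ), w (g (k+2)) (g k) = ((y : ℤ) : WithBot ℤ) →
        E k + E (k+1) + y ≤ -1 := by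
      intro k y hy
      have n01 : g k ≠ g (k+1) := hgne k 1 (by omega) (by omega)
      have n02 : g k ≠ g (k+2) := hgne k 2 (by omega) (by omega)
      have n12 : g (k+1) ≠ g (k+2) := hgne (k+1) 1 (by omega) (by omega)
      have hcp3 : cpairs [g k, g (k+1), g (k+2)]
          = [(g k, g (k+1)), (g (k+1), g (k+2)), (g (k+2), g k)] := by
        rw [cpairs_cons₂]
        simp
      have hpres2 : w (g (k+1)) (g (k+2)) ≠ ⊥ := hpres (k+1)
      have hE2 : w (g (k+1)) (g (k+2)) = ((E (k+1) : ℤ) : WithBot ℤ) := hE (k+1)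
      have hcyc : IsCycle w [g k, g (k+1), g (k+2)] := by
        refine ⟨by simp, by simp [n01, n02, n12], ?_⟩
        intro p hp
        rw [hcp3] at hp
        simp only [List.mem_cons, List.not_mem_nil, or_false] at hp
        rcases hp with rfl | rfl | rfl
        · exact hpres k
        · exact hpres2
        · rw [hy]; exact WithBot.coe_ne_bot
      have hW3 : cycWeight w [g k, g (k+1), g (k+2)]
          = ((E k + (E (k+1) + (y + 0)) : ℤ) : WithBot ℤ) := by
        unfold cycWeight
        rw [hcp3]
        simp only [List.map_cons, List.map_nil, List.sum_cons, List.sum_nil]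
        rw [hE k, hE2, hy, ← WithBot.coe_zero, ← WithBot.coe_add, ← WithBot.coe_add,
          ← WithBot.coe_add]
      by_contra hcon
      refine h3 [g k, g (k+1), g (k+2)] rfl ⟨hcyc, ?_⟩
      rw [hW3]
      exact_mod_cast (by omega : (0 : ℤ) ≤ E k + (E (k+1) + (y + 0)))
    -- classification of windows
    have classB : ∀ k, w (g k) (g (k+2)) = ⊥ →
        E k + E (k+1) + trBeta a b (g (k+2)) (g k) ≤ -1 := by
      intro k hB
      have hne : g k ≠ g (k+2) := hgne k 2 (by omega) (by omega)
      have hval := ((hw.2 _ _ hne).2.1).mp hB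
      exact tri k _ hval
    have classA : ∀ k, w (g k) (g (k+2)) ≠ ⊥ →
        S + 1 + trBeta a b (g k) (g (k+2)) ≤ E k + E (k+1) := by
      intro k hA
      obtain ⟨rest, hr⟩ := rot4 k
      have hmasc : MAscending w (g k :: g (k+1) :: g (k+2) :: g (k+3) :: rest) :=
        hr ▸ masc_rotate hasc k
      have hlen4 : (g k :: g (k+1) :: g (k+2) :: g (k+3) :: rest).length = m := by
        rw [← hr, List.length_rotate, hlen]
      have hcp4 : cpairs (g k :: g (k+1) :: g (k+2) :: g (k+3) :: rest)
          = (g k, g (k+1)) :: (g (k+1), g (k+2)) ::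
            ((g (k+2) :: g (k+3) :: rest).zip ((g (k+3) :: rest) ++ [g k])) := by
        rw [cpairs_cons₂, List.cons_append, List.zip_cons_cons]
      have htail : ∀ p ∈ (g (k+2) :: g (k+3) :: rest).zip ((g (k+3) :: rest) ++ [g k]),
          w p.1 p.2 ≠ ⊥ := by
        intro p hp
        exact hmasc.1.2.2 p
          (by rw [hcp4]; exact List.mem_cons_of_mem _ (List.mem_cons_of_mem _ hp))
      have hT := sum_coe w ((g (k+2) :: g (k+3) :: rest).zip ((g (k+3) :: rest) ++ [g k])) htail
      have hE2 : w (g (k+1)) (g (k+2)) = ((E (k+1) : ℤ) : WithBot ℤ) := hE (k+1)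
      have hw4 : cycWeight w (g k :: g (k+1) :: g (k+2) :: g (k+3) :: rest)
          = ((E k + (E (k+1) +
              (((g (k+2) :: g (k+3) :: rest).zip ((g (k+3) :: rest) ++ [g k])).map
                (fun p => (w p.1 p.2).unbotD 0)).sum) : ℤ) : WithBot ℤ) := by
        unfold cycWeight
        rw [hcp4]
        simp only [List.map_cons, List.sum_cons]
        rw [hT, hE k, hE2, ← WithBot.coe_add, ← WithBot.coe_add]
      have hSsp : S = E k + (E (k+1) +
          (((g (k+2) :: g (k+3) :: rest).zip ((g (k+3) :: rest) ++ [g k])).map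
            (fun p => (w p.1 p.2).unbotD 0)).sum) := by
        have h0 : cycWeight w (g k :: g (k+1) :: g (k+2) :: g (k+3) :: rest)
            = ((S : ℤ) : WithBot ℤ) := by rw [← hr, cycWeight_rotate]; exact hSW
        exact_mod_cast h0.symm.trans hw4
      -- shortcut cycle
      obtain ⟨x, hx⟩ := WithBot.ne_bot_iff_exists.1 hA
      have hcpsc : cpairs (g k :: g (k+2) :: g (k+3) :: rest)
          = (g k, g (k+2)) ::
            ((g (k+2) :: g (k+3) :: rest).zip ((g (k+3) :: rest) ++ [g k])) :=
        cpairs_cons₂ _ _ _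
      have hscW : cycWeight w (g k :: g (k+2) :: g (k+3) :: rest)
          = ((x + (((g (k+2) :: g (k+3) :: rest).zip ((g (k+3) :: rest) ++ [g k])).map
              (fun p => (w p.1 p.2).unbotD 0)).sum : ℤ) : WithBot ℤ) := by
        unfold cycWeight
        rw [hcpsc]
        simp only [List.map_cons, List.sum_cons]
        rw [hT, ← hx, ← WithBot.coe_add]
      have hscnd : (g k :: g (k+2) :: g (k+3) :: rest).Nodup :=
        List.Nodup.sublist
          (List.Sublist.cons₂ _ (List.sublist_cons_self _ _)) hmasc.1.2.1
      have hsccyc : IsCycle w (g k :: g (k+2) :: g (k+3) :: rest) := by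
        refine ⟨by simp only [List.length_cons]; omega, hscnd, ?_⟩
        intro p hp
        rw [hcpsc] at hp
        rcases List.mem_cons.1 hp with rfl | hp'
        · exact hA
        · exact htail p hp'
      have hnasc : ¬ MAscending w (g k :: g (k+2) :: g (k+3) :: rest) := by
        apply IH (m-1) (by omega)
        simp only [List.length_cons] at hlen4 ⊢
        omega
      have hxle : x + (((g (k+2) :: g (k+3) :: rest).zip ((g (k+3) :: rest) ++ [g k])).map
          (fun p => (w p.1 p.2).unbotD 0)).sum ≤ -1 := by
        by_contra hcon
        refine hnasc ⟨hsccyc, ?_⟩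
        rw [hscW]
        exact_mod_cast (by omega : (0:ℤ) ≤ x + (((g (k+2) :: g (k+3) :: rest).zip
          ((g (k+3) :: rest) ++ [g k])).map (fun p => (w p.1 p.2).unbotD 0)).sum)
      by_cases hzu : w (g (k+2)) (g k) = ⊥
      · have hne2 : g (k+2) ≠ g k := (hgne k 2 (by omega) (by omega)).symm
        have hval := ((hw.2 _ _ hne2).2.1).mp hzu
        have hxβ : x = trBeta a b (g k) (g (k+2)) := by
          have h5 := hx.trans hval
          exact_mod_cast h5
        omega
      · exfalso
        obtain ⟨y, hy⟩ := WithBot.ne_bot_iff_exists.1 hzu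
        have hne : g k ≠ g (k+2) := hgne k 2 (by omega) (by omega)
        have hyx : y = -1 - x := (hw.2 _ _ hne).2.2 x y hx.symm hy.symm
        have htri := tri k y hy.symm
        omega
    -- junction contradictions
    have hAB : ∀ k, w (g k) (g (k+2)) ≠ ⊥ → w (g (k+1)) (g (k+3)) = ⊥ → False := by
      intro k hA hB
      have hAineq := classA k hA
      have hBineq : E (k+1) + E (k+2) + trBeta a b (g (k+3)) (g (k+1)) ≤ -1 :=
        classB (k+1) hB
      have f1 : E k ≤ trBeta a b (g k) (g (k+1)) := (hEb k).2
      have f2 := (hβ1 (g k) (g (k+1))).2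
      have f3 : trAlpha a b (g (k+2)) (g (k+3)) ≤ E (k+2) := (hEb (k+2)).1
      have f4 := (hα1 (g (k+2)) (g (k+3))).1
      have f5 := (hβ1 (g k) (g (k+2))).1
      have f6 := (hβ1 (g (k+3)) (g (k+1))).1
      have o2 : g k < g (k+1) := by
        rcases lt_trichotomy (g k) (g (k+1)) with h | h | h
        · exact h
        · exact absurd h (hgne k 1 (by omega) (by omega))
        · exfalso
          have hβe : trBeta a b (g k) (g (k+1)) = a - 1 := by
            unfold trBeta
            rw [if_neg (by exact not_lt_of_gt h)]
          omega
      have o1 : g (k+2) < g k := by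
        rcases lt_trichotomy (g (k+2)) (g k) with h | h | h
        · exact h
        · exact absurd h.symm (hgne k 2 (by omega) (by omega))
        · exfalso
          have hβe : trBeta a b (g k) (g (k+2)) = b - 1 := by
            unfold trBeta
            rw [if_pos h]
          omega
      have o4 : g (k+3) < g (k+2) := by
        rcases lt_trichotomy (g (k+3)) (g (k+2)) with h | h | h
        · exact h
        · exact absurd h.symm (hgne (k+2) 1 (by omega) (by omega))
        · exfalso
          have hαe : trAlpha a b (g (k+2)) (g (k+3)) = 1 - a := by
            unfold trAlpha
            rw [if_pos h]
          omega
      have o3 : g (k+1) < g (k+3) := by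
        rcases lt_trichotomy (g (k+1)) (g (k+3)) with h | h | h
        · exact h
        · exact absurd h (hgne (k+1) 2 (by omega) (by omega))
        · exfalso
          have hβe : trBeta a b (g (k+3)) (g (k+1)) = b - 1 := by
            unfold trBeta
            rw [if_pos h]
          omega
      exact absurd (o2.trans (o3.trans (o4.trans o1))) (lt_irrefl _)
    have hBA : ∀ k, w (g k) (g (k+2)) = ⊥ → w (g (k+1)) (g (k+3)) ≠ ⊥ → False := by
      intro k hB hA
      have hBineq := classB k hB
      have hAineq : S + 1 + trBeta a b (g (k+1)) (g (k+3)) ≤ E (k+1) + E (k+2) :=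
        classA (k+1) hA
      have f1 : trAlpha a b (g k) (g (k+1)) ≤ E k := (hEb k).1
      have f2 := (hα1 (g k) (g (k+1))).1
      have f3 : E (k+2) ≤ trBeta a b (g (k+2)) (g (k+3)) := (hEb (k+2)).2
      have f4 := (hβ1 (g (k+2)) (g (k+3))).2
      have f5 := (hβ1 (g (k+2)) (g k)).1
      have f6 := (hβ1 (g (k+1)) (g (k+3))).1
      have o2 : g (k+1) < g k := by
        rcases lt_trichotomy (g (k+1)) (g k) with h | h | h
        · exact h
        · exact absurd h.symm (hgne k 1 (by omega) (by omega))
        · exfalso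
          have hαe : trAlpha a b (g k) (g (k+1)) = 1 - a := by
            unfold trAlpha
            rw [if_pos h]
          omega
      have o1 : g k < g (k+2) := by
        rcases lt_trichotomy (g k) (g (k+2)) with h | h | h
        · exact h
        · exact absurd h (hgne k 2 (by omega) (by omega))
        · exfalso
          have hβe : trBeta a b (g (k+2)) (g k) = b - 1 := by
            unfold trBeta
            rw [if_pos h]
          omega
      have o4 : g (k+2) < g (k+3) := by
        rcases lt_trichotomy (g (k+2)) (g (k+3)) with h | h | h
        · exact h
        · exact absurd h (hgne (k+2) 1 (by omega) (by omega))
        · exfalso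
          have hβe : trBeta a b (g (k+2)) (g (k+3)) = a - 1 := by
            unfold trBeta
            rw [if_neg (by exact not_lt_of_gt h)]
          omega
      have o3 : g (k+3) < g (k+1) := by
        rcases lt_trichotomy (g (k+3)) (g (k+1)) with h | h | h
        · exact h
        · exact absurd h.symm (hgne (k+1) 2 (by omega) (by omega))
        · exfalso
          have hβe : trBeta a b (g (k+1)) (g (k+3)) = b - 1 := by
            unfold trBeta
            rw [if_pos h]
          omega
      exact absurd (o2.trans (o1.trans (o4.trans o3))) (lt_irrefl _)
    have hiff : ∀ k, (w (g k) (g (k+2)) ≠ ⊥) ↔ (w (g (k+1)) (g (k+1+2)) ≠ ⊥) := by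
      intro k
      constructor
      · intro h
        by_contra h'
        exact hAB k h h'
      · intro h
        by_contra h'
        exact hBA k h' h
    have hconst : ∀ k, (w (g k) (g (k+2)) ≠ ⊥) ↔ (w (g 0) (g (0+2)) ≠ ⊥) := by
      intro k
      induction k with
      | zero => exact Iff.rfl
      | succ k ih => exact (hiff k).symm.trans ih
    have hlenE : eL.length = m := by
      rw [heL, List.length_map]
      unfold cpairs
      rw [List.length_zip, List.length_rotate, hlen, min_self]
    have hmemE : ∀ k, E k ∈ eL := by
      intro k
      rw [hEdef k, heL]
      exact List.mem_map_of_mem (hmem k)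
    have hrepr : ∀ p ∈ cpairs c, ∃ k, p = (g k, g (k+1)) := by
      intro p hp
      obtain ⟨i, hi, hip⟩ := List.mem_iff_getElem.1 hp
      have hlz : (cpairs c).length = m := by
        unfold cpairs
        rw [List.length_zip, List.length_rotate, hlen, min_self]
      have him : i < m := hlz ▸ hi
      refine ⟨i, ?_⟩
      rw [← hip]
      show (c.zip (c.rotate 1))[i]'(by rw [List.length_zip, List.length_rotate, min_self, hlen]; exact him) = _
      rw [List.getElem_zip, List.getElem_rotate]
      have e1 : i % m = i := Nat.mod_eq_of_lt him
      rw [hgdef i, hgdef (i+1)]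
      simp only [e1, hlen]
    by_cases hA0 : w (g 0) (g (0+2)) ≠ ⊥
    · -- all windows of type A
      have hallA : ∀ k, w (g k) (g (k+2)) ≠ ⊥ := fun k => (hconst k).2 hA0
      have hedge : ∀ q ∈ eL, S ≤ q := by
        intro q hq
        rw [heL] at hq
        obtain ⟨p, hp, rfl⟩ := List.mem_map.1 hq
        obtain ⟨k, rfl⟩ := hrepr p hp
        show S ≤ (w (g k) (g (k+1))).unbotD 0
        rw [← hEdef k]
        have h1 := classA k (hallA k)
        have h2 : E (k+1) ≤ trBeta a b (g (k+1)) (g (k+2)) := (hEb (k+1)).2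
        have h3' := (hβ1 (g (k+1)) (g (k+2))).2
        have h4 := (hβ1 (g k) (g (k+2))).1
        omega
      have hcard := List.card_nsmul_le_sum eL S hedge
      rw [hlenE, ← hS, nsmul_eq_mul] at hcard
      have h4S : (4 : ℤ) * S ≤ (m : ℤ) * S := by
        apply mul_le_mul_of_nonneg_right _ hS0
        exact_mod_cast hm4
      have hSnonpos : S ≤ 0 := by linarith
      have hpos : ∀ q ∈ eL, (0 : ℤ) ≤ q := fun q hq => le_trans hS0 (hedge q hq)
      have hE0 : E 0 ≤ S := by
        have := List.single_le_sum hpos (E 0) (hmemE 0)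
        rwa [← hS] at this
      have hE1 : E (0+1) ≤ S := by
        have := List.single_le_sum hpos (E (0+1)) (hmemE (0+1))
        rwa [← hS] at this
      have hA0' := classA 0 hA0
      have hβ := (hβ1 (g 0) (g (0+2))).1
      omega
    · -- all windows of type B
      have hallB : ∀ k, w (g k) (g (k+2)) = ⊥ :=
        fun k => not_not.1 fun h => hA0 ((hconst k).1 h)
      have hBi : ∀ k, E k + E (k+1) + trBeta a b (g (k+2)) (g k) ≤ -1 :=
        fun k => classB k (hallB k)
      have hedge : ∀ q ∈ eL, q ≤ 0 := by
        intro q hq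
        rw [heL] at hq
        obtain ⟨p, hp, rfl⟩ := List.mem_map.1 hq
        obtain ⟨k, rfl⟩ := hrepr p hp
        show (w (g k) (g (k+1))).unbotD 0 ≤ 0
        rw [← hEdef k]
        have h1 := hBi k
        have h2 : trAlpha a b (g (k+1)) (g (k+2)) ≤ E (k+1) := (hEb (k+1)).1
        have h3' := (hα1 (g (k+1)) (g (k+2))).1
        have h4 := (hβ1 (g (k+2)) (g k)).1
        omega
      have hcard := List.sum_le_card_nsmul eL 0 hedge
      rw [hlenE, ← hS, smul_zero] at hcard
      have hSz : S = 0 := le_antisymm hcard hS0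
      have hneg : ∀ q ∈ eL.map (fun x : ℤ => -x), (0 : ℤ) ≤ q := by
        intro q hq
        obtain ⟨r, hr, rfl⟩ := List.mem_map.1 hq
        have := hedge r hr
        omega
      have hsum' : (eL.map (fun x : ℤ => -x)).sum = 0 := by
        rw [sum_map_neg, ← hS, hSz, neg_zero]
      have hE0 : (0 : ℤ) ≤ E 0 := by
        have h := List.single_le_sum hneg (-(E 0)) (List.mem_map_of_mem (hmemE 0))
        rw [hsum'] at h
        omega
      have hE1 : (0 : ℤ) ≤ E (0+1) := by
        have h := List.single_le_sum hneg (-(E (0+1))) (List.mem_map_of_mem (hmemE (0+1)))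
        rw [hsum'] at h
        omega
      have hB0 := hBi 0
      have hβ := (hβ1 (g (0+2)) (g 0)).1
      omega

theorem stmt11 (n : ℕ) (a b : ℤ) (ha : 1 ≤ a) (hab : a ≤ b) (hba : b ≤ a + 1)
    (w : Fin n → Fin n → WithBot ℤ) (hw : ValidW (trAlpha a b) (trBeta a b) w) :
    MAcyclic w ↔ ∀ c : List (Fin n), c.length = 3 → ¬ MAscending w c := by
  constructor
  · intro h c _
    exact h c
  · intro h3 c
    exact core_noasc n a b ha hab hba w hw h3 c.length c rfl
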